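/- Let 𝔽_q be a finite field of characteristic p, let e ≥ 1 with p not dividing e, let k be a natural number, and let f ∈ 𝔽_q[Y] be a monic polynomial dividing Y^e - 1. Set W = 𝔽_q[Z]/⟨Z^{p^k} - 1⟩ and B = W[Y]/⟨f_W⟩, where f_W is the image of f in W[Y]. Then for every ideal C of B there exist polynomials h_0, h_1, …, h_{p^k - 1} ∈ 𝔽_q[Y] with h_{i+1} ∣ h_i for all 0 ≤ i < p^k - 1 and h_0 ∣ f, such that C is the ideal of B generated by the p^k elements (z - 1)^i · h_i(y) for 0 ≤ i ≤ p^k - 1, where z denotes the image of Z and y the image of Y in B. -/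

import Mathlib

open Polynomial

instance {R : Type*} [CommRing R] (I : Ideal R) (J : Ideal (R ⧸ I)[X]) : J.IsTwoSided :=
  Ideal.instIsTwoSided_1 J

set_option maxHeartbeats 1000000 in
set_option synthInstance.maxHeartbeats 400000 in
/-- Every ideal of `B = W[Y]/⟨f_W⟩`, where `W = 𝔽_q[Z]/⟨Z^(p^k) - 1⟩` and `f` is monic
dividing `Y^e - 1` with `p ∤ e`, is generated by elements
`(z-1)^i · h_i(y)`, `0 ≤ i ≤ p^k - 1`, where `h_{i+1} ∣ h_i` and `h_0 ∣ f`. -/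
theorem ideal_structure_over_chain_ring {K : Type*} [Field K] [Fintype K]
    (p : ℕ) (hp : p.Prime) [CharP K p] (e : ℕ) (he : 1 ≤ e) (hpe : ¬ p ∣ e)
    (k : ℕ) (f : K[X]) (hf : f.Monic) (hdvd : f ∣ X ^ e - 1)
    (C : Ideal ((K[X] ⧸ Ideal.span {(X : K[X]) ^ p ^ k - 1})[X] ⧸
      Ideal.span
        {f.map (algebraMap K (K[X] ⧸ Ideal.span {(X : K[X]) ^ p ^ k - 1}))})) :
    ∃ h : Fin (p ^ k) → K[X],
      (∀ i j : Fin (p ^ k), (j : ℕ) = (i : ℕ) + 1 → h j ∣ h i) ∧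
      (∀ i : Fin (p ^ k), (i : ℕ) = 0 → h i ∣ f) ∧
      C = Ideal.span (Set.range fun i : Fin (p ^ k) =>
        (Ideal.Quotient.mk
            (Ideal.span
              {f.map (algebraMap K (K[X] ⧸ Ideal.span {(X : K[X]) ^ p ^ k - 1}))})
            (Polynomial.C
              (Ideal.Quotient.mk (Ideal.span {(X : K[X]) ^ p ^ k - 1}) X)) - 1) ^ (i : ℕ) *
          Ideal.Quotient.mk
            (Ideal.span
              {f.map (algebraMap K (K[X] ⧸ Ideal.span {(X : K[X]) ^ p ^ k - 1}))})
            ((h i).map (algebraMap K (K[X] ⧸ Ideal.span {(X : K[X]) ^ p ^ k - 1})))) := by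
  classical
  haveI : Fact p.Prime := ⟨hp⟩
  revert C
  set n := p ^ k with hn
  have hn1 : 1 ≤ n := Nat.one_le_pow _ _ hp.pos
  set IW : Ideal K[X] := Ideal.span {(X : K[X]) ^ n - 1} with hIW
  set W := K[X] ⧸ IW with hW
  set w : W := Ideal.Quotient.mk IW X with hw
  set fW : W[X] := f.map (algebraMap K W) with hfW
  set IB : Ideal W[X] := Ideal.span {fW} with hIB
  set B := W[X] ⧸ IB with hB
  letI : CommRing B := { (inferInstance : Ring B) with
    mul_comm := by rintro ⟨a⟩ ⟨b⟩; exact congrArg _ (mul_comm a b) }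
  set z : B := Ideal.Quotient.mk IB (Polynomial.C w) with hz
  set t : B := z - 1 with ht
  set φ : K[X] →+* B := (Ideal.Quotient.mk IB).comp (mapRingHom (algebraMap K W)) with hφ
  intro C
  have hφapp : ∀ a : K[X], φ a = Ideal.Quotient.mk IB (a.map (algebraMap K W)) := fun a => rfl
  -- W is nontrivial of characteristic p
  have hIWne : IW ≠ ⊤ := by
    rw [hIW, Ne, Ideal.span_singleton_eq_top]
    exact not_isUnit_X_pow_sub_one K n
  haveI : Nontrivial W := Ideal.Quotient.nontrivial_iff.mpr hIWne
  haveI : CharP W p := charP_of_injective_algebraMap' K p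
  -- algebraMap K W is mk ∘ C
  have halg : ∀ c : K, algebraMap K W c = Ideal.Quotient.mk IW (Polynomial.C c) := by
    intro c
    rw [show (Polynomial.C c : K[X]) = algebraMap K K[X] c from rfl,
      Ideal.Quotient.mk_algebraMap]
  -- t ^ n = 0
  have hwn : w ^ n = 1 := by
    have h0 : Ideal.Quotient.mk IW ((X : K[X]) ^ n - 1) = 0 :=
      Ideal.Quotient.eq_zero_iff_mem.mpr (by rw [hIW]; exact Ideal.mem_span_singleton_self _)
    have := sub_eq_zero.mp (by simpa [hw] using h0)
    simpa using this
  have hw1n : (w - 1) ^ n = 0 := by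
    rw [hn, sub_pow_char_pow, ← hn, hwn, one_pow, sub_self]
  have htz : t = Ideal.Quotient.mk IB (Polynomial.C (w - 1)) := by
    rw [ht, hz, map_sub, map_sub, map_one, map_one]
  have htn : t ^ n = 0 := by
    rw [htz, ← map_pow, ← Polynomial.C_pow, hw1n, Polynomial.C_0, map_zero]
  -- φ f = 0
  have hφf : φ f = 0 := by
    rw [hφapp, ← hfW]
    exact Ideal.Quotient.eq_zero_iff_mem.mpr (by rw [hIB]; exact Ideal.mem_span_singleton_self _)
  -- decomposition of elements of B
  have hker : ∀ a ∈ IW, evalRingHom (1 : K) a = 0 := by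
    intro a ha
    obtain ⟨b, hb⟩ := Ideal.mem_span_singleton'.mp (hIW ▸ ha)
    rw [← hb]
    simp [coe_evalRingHom]
  set π : W →+* K := Ideal.Quotient.lift IW (evalRingHom (1 : K)) hker with hπ
  have hπw : ∀ x : W, ∃ q : W, x - algebraMap K W (π x) = (w - 1) * q := by
    intro x
    obtain ⟨P, rfl⟩ := Ideal.Quotient.mk_surjective x
    have hπP : π (Ideal.Quotient.mk IW P) = P.eval 1 := by
      rw [hπ, Ideal.Quotient.lift_mk, coe_evalRingHom]
    obtain ⟨q0, hq0⟩ : (X - Polynomial.C (1 : K)) ∣ (P - Polynomial.C (P.eval 1)) :=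
      X_sub_C_dvd_sub_C_eval
    refine ⟨Ideal.Quotient.mk IW q0, ?_⟩
    rw [hπP, halg, ← map_sub, hq0, map_mul, map_sub, Polynomial.C_1, map_one, hw]
  have hdec : ∀ b : B, ∃ (a : K[X]) (b' : B), b = φ a + t * b' := by
    intro b
    obtain ⟨Q, rfl⟩ := Ideal.Quotient.mk_surjective b
    set a : K[X] := Q.map π with ha
    have hco : ∀ j, (w - 1) ∣ (Q - a.map (algebraMap K W)).coeff j := by
      intro j
      rw [coeff_sub, ha, coeff_map, coeff_map]
      obtain ⟨q, hq⟩ := hπw (Q.coeff j)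
      exact ⟨q, hq ▸ rfl⟩
    obtain ⟨Q', hQ'⟩ := (Polynomial.C_dvd_iff_dvd_coeff _ _).mpr hco
    refine ⟨a, Ideal.Quotient.mk IB Q', ?_⟩
    have hQeq : Q = a.map (algebraMap K W) + Polynomial.C (w - 1) * Q' := by
      rw [← hQ']; ring
    rw [hQeq, map_add, map_mul, ← htz, hφapp]
  -- the ideals J i of leading coefficients
  set J : ℕ → Ideal K[X] := fun i =>
    Ideal.comap φ ((C ⊔ Ideal.span {t ^ (i + 1)}).colon (Ideal.span {t ^ i})) with hJ
  have hJmem : ∀ (i : ℕ) (a : K[X]),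
      a ∈ J i ↔ ∃ c ∈ C, ∃ r : B, t ^ i * φ a = c + t ^ (i + 1) * r := by
    intro i a
    rw [hJ]
    simp only [Ideal.mem_comap, Ideal.mem_colon_span_singleton]
    rw [Submodule.mem_sup]
    constructor
    · rintro ⟨c, hc, x, hx, hsum⟩
      obtain ⟨r, hr⟩ := Ideal.mem_span_singleton'.mp hx
      exact ⟨c, hc, r, by linear_combination -hsum - hr⟩
    · rintro ⟨c, hc, r, hr⟩
      exact ⟨c, hc, t ^ (i + 1) * r,
        Ideal.mem_span_singleton'.mpr ⟨r, mul_comm _ _⟩, by linear_combination -hr⟩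
  have hfJ : ∀ i, f ∈ J i := by
    intro i
    rw [hJmem]
    exact ⟨0, C.zero_mem, 0, by rw [hφf, mul_zero, mul_zero, add_zero]⟩
  have hJmono : ∀ i, J i ≤ J (i + 1) := by
    intro i a haJ
    rw [hJmem] at haJ ⊢
    obtain ⟨c, hc, r, hr⟩ := haJ
    refine ⟨t * c, C.mul_mem_left t hc, r, ?_⟩
    have : t ^ (i + 1) * φ a = t * (t ^ i * φ a) := by ring
    rw [this, hr]
    ring
  -- generators of the J i
  have hprin : ∀ i : ℕ, ∃ g : K[X], J i = Ideal.span {g} := by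
    intro i
    exact ⟨Submodule.IsPrincipal.generator (J i),
      (Submodule.IsPrincipal.span_singleton_generator (J i)).symm⟩
  choose g hg using hprin
  have hgf : ∀ i, g i ∣ f := fun i => Ideal.mem_span_singleton.mp ((hg i) ▸ hfJ i)
  have hgJ : ∀ i, g i ∈ J i := fun i => (hg i) ▸ Ideal.mem_span_singleton_self _
  have hgsucc : ∀ i, g (i + 1) ∣ g i := by
    intro i
    exact Ideal.mem_span_singleton.mp ((hg (i + 1)) ▸ hJmono i (hgJ i))
  -- separability: idempotent-type identity
  have hsepXe : ((X : K[X]) ^ e - 1).Separable := by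
    have := separable_X_pow_sub_C' p e (1 : K) hpe one_ne_zero
    simpa using this
  have hsep : f.Separable := hsepXe.of_dvd hdvd
  have hidem : ∀ i, ∃ u : K[X], φ u * φ (g i) * φ (g i) = φ (g i) := by
    intro i
    obtain ⟨m, hm⟩ := hgf i
    have hco : IsCoprime (g i) m := Polynomial.Separable.isCoprime (hm ▸ hsep)
    obtain ⟨u, v, huv⟩ := hco
    refine ⟨u, ?_⟩
    have hkey : u * g i * g i + v * f = g i := by
      rw [hm]; linear_combination (g i) * huv
    have := congrArg φ hkey
    rw [map_add, map_mul, map_mul, map_mul, hφf, mul_zero, add_zero] at this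
    exact this
  -- the generators lie in C
  have hP : ∀ i, i < n → t ^ i * φ (g i) ∈ C := by
    have key : ∀ d i, n - i ≤ d → i < n → t ^ i * φ (g i) ∈ C := by
      intro d
      induction d with
      | zero => intro i h1 h2; omega
      | succ d ih =>
        intro i h1 h2
        obtain ⟨c, hc, r, hr⟩ := (hJmem i (g i)).mp (hgJ i)
        by_cases hin : i + 1 = n
        · rw [hin, htn, zero_mul, add_zero] at hr
          rw [hr]; exact hc
        · have hi1 : i + 1 < n := by omega
          have hC1 : t ^ (i + 1) * φ (g (i + 1)) ∈ C := ih (i + 1) (by omega) hi1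
          obtain ⟨u, hu⟩ := hidem i
          obtain ⟨s, hs⟩ := hgsucc i
          have hφs : φ (g i) = φ (g (i + 1)) * φ s := by rw [hs, map_mul]
          have e1 : t ^ i * φ (g i) = φ u * φ (g i) * (t ^ i * φ (g i)) := by
            rw [show φ u * φ (g i) * (t ^ i * φ (g i))
                = t ^ i * (φ u * φ (g i) * φ (g i)) by ring, hu]
          have e2 : φ u * φ (g i) * (t ^ (i + 1) * r)
              = (φ u * φ s * r) * (t ^ (i + 1) * φ (g (i + 1))) := by
            rw [hφs]; ring
          rw [e1, hr, mul_add, e2]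
          exact C.add_mem (C.mul_mem_left _ hc) (C.mul_mem_left _ hC1)
    intro i hi
    exact key (n - i) i le_rfl hi
  -- the span
  set S : Set B := Set.range fun i : Fin n => t ^ (i : ℕ) * φ (g (i : ℕ)) with hS
  have hle1 : Ideal.span S ≤ C := by
    rw [Ideal.span_le]
    rintro x ⟨i, rfl⟩
    exact hP (i : ℕ) i.isLt
  have hle2 : C ≤ Ideal.span S := by
    have key : ∀ d i, n ≤ i + d → ∀ r : B, t ^ i * r ∈ C → t ^ i * r ∈ Ideal.span S := by
      intro d
      induction d with
      | zero =>
        intro i h1 r _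
        have hti : (t : B) ^ i = 0 := by
          rw [show i = n + (i - n) by omega, pow_add, htn, zero_mul]
        rw [hti, zero_mul]
        exact (Ideal.span S).zero_mem
      | succ d ih =>
        intro i h1 r hr
        by_cases hi : n ≤ i
        · have hti : (t : B) ^ i = 0 := by
            rw [show i = n + (i - n) by omega, pow_add, htn, zero_mul]
          rw [hti, zero_mul]
          exact (Ideal.span S).zero_mem
        · push_neg at hi
          obtain ⟨a, b', hab⟩ := hdec r
          have h1' : t ^ i * r = t ^ i * φ a + t ^ (i + 1) * b' := by
            rw [hab]; ring
          have haJ : a ∈ J i := by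
            rw [hJmem]
            exact ⟨t ^ i * r, hr, -b', by rw [h1']; ring⟩
          obtain ⟨s, hs⟩ := Ideal.mem_span_singleton.mp ((hg i) ▸ haJ)
          have hPi : t ^ i * φ (g i) ∈ C := hP i hi
          have h2 : t ^ i * φ a = φ s * (t ^ i * φ (g i)) := by
            rw [hs, map_mul]; ring
          have h3 : t ^ (i + 1) * b' ∈ C := by
            have := C.sub_mem hr (h2 ▸ C.mul_mem_left (φ s) hPi)
            rw [show t ^ i * r - t ^ i * φ a = t ^ (i + 1) * b' by rw [h1']; ring] at this
            exact this
          have h4 : t ^ (i + 1) * b' ∈ Ideal.span S := ih (i + 1) (by omega) b' h3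
          have h5 : t ^ i * φ a ∈ Ideal.span S := by
            rw [h2]
            exact Ideal.mul_mem_left _ _ (Ideal.subset_span ⟨⟨i, hi⟩, rfl⟩)
          rw [h1']
          exact Ideal.add_mem _ h5 h4
    intro c hc
    have := key n 0 (by omega) c (by simpa using hc)
    simpa using this
  have hmain : C = Ideal.span S := le_antisymm hle2 hle1
  refine ⟨fun i : Fin n => g (i : ℕ), ?_, ?_, ?_⟩
  · intro i j hij
    show g (j : ℕ) ∣ g (i : ℕ)
    rw [hij]
    exact hgsucc (i : ℕ)
  · intro i hi
    show g (i : ℕ) ∣ f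
    rw [hi]
    exact hgf 0
  · exact hmain
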